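/- For every field K, u(K(x)) ≥ 2·u(K), where u denotes the u-invariant and K(x) is the rational function field in one variable over K. (Interpreted so that the inequality holds also when u(K) is infinite.) -/

import Mathlib

open MvPolynomial Polynomial

namespace UInvAux

lemma eval_mul_of_isHomogeneous {R σ : Type*} [CommSemiring R] {φ : MvPolynomial σ R} {n : ℕ}
    (h : φ.IsHomogeneous n) (c : R) (f : σ → R) :
    MvPolynomial.eval (fun i => c * f i) φ = c ^ n * MvPolynomial.eval f φ := by
  rw [MvPolynomial.eval_eq, MvPolynomial.eval_eq, Finset.mul_sum]
  refine Finset.sum_congr rfl fun d hd => ?_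
  rw [MvPolynomial.mem_support_iff] at hd
  have hdeg : d.degree = n := by
    by_contra hne
    exact hd (h.coeff_eq_zero hne)
  have key : (∏ i ∈ d.support, (c * f i) ^ d i)
      = c ^ n * ∏ i ∈ d.support, f i ^ d i := by
    rw [← hdeg]
    simp_rw [mul_pow]
    rw [Finset.prod_mul_distrib, Finset.prod_pow_eq_pow_sum]
    rfl
  rw [key]
  ring

variable {K : Type*} [Field K]

lemma eval_coeff_zero {m : ℕ} (Q : MvPolynomial (Fin m) K) (y : Fin m → K[X]) :
    Polynomial.eval 0 (MvPolynomial.eval y (MvPolynomial.map Polynomial.C Q))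
      = MvPolynomial.eval (fun i => (y i).coeff 0) Q := by
  rw [MvPolynomial.eval_map]
  rw [show Polynomial.eval (0 : K) = ⇑(Polynomial.evalRingHom 0) from rfl]
  rw [MvPolynomial.eval₂_comp_left (Polynomial.evalRingHom 0) Polynomial.C y Q]
  have h1 : (Polynomial.evalRingHom (0 : K)).comp Polynomial.C = RingHom.id K := by
    ext a; simp
  rw [h1, MvPolynomial.eval₂_id]
  have h2 : (⇑(Polynomial.evalRingHom (0 : K)) ∘ y) = fun i => (y i).coeff 0 := by
    funext i
    simp [Polynomial.coeff_zero_eq_eval_zero]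
  rw [h2]

lemma L1 {m : ℕ} {Q : MvPolynomial (Fin m) K} (hQ : Q.IsHomogeneous 2) :
    ∀ N : ℕ, ∀ z : Fin m → K[X], (∑ i, (z i).natDegree) < N → z ≠ 0 →
      MvPolynomial.eval z (MvPolynomial.map Polynomial.C Q) = 0 →
      ∃ x : Fin m → K, x ≠ 0 ∧ MvPolynomial.eval x Q = 0 := by
  intro N
  induction N with
  | zero => intro z h; omega
  | succ N ih =>
    intro z hlt hz h0
    by_cases hc : (fun i => (z i).coeff 0) = 0
    · have hP : (MvPolynomial.map (Polynomial.C : K →+* K[X]) Q).IsHomogeneous 2 := hQ.map _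
      set z' : Fin m → K[X] := fun i => (z i).divX with hz'
      have hzz : ∀ i, z i = Polynomial.X * z' i := by
        intro i
        have h := Polynomial.X_mul_divX_add (z i)
        have hc0 : (z i).coeff 0 = 0 := congrFun hc i
        rw [hc0, map_zero, add_zero] at h
        exact h.symm
      obtain ⟨i0, hi0⟩ : ∃ i, z i ≠ 0 := by
        by_contra h; push_neg at h; exact hz (funext h)
      have hzi0' : z' i0 ≠ 0 := fun h => hi0 (by rw [hzz i0, h, mul_zero])
      have hz'0 : z' ≠ 0 := fun h => hzi0' (congrFun h i0)
      have heval : MvPolynomial.eval z' (MvPolynomial.map Polynomial.C Q) = 0 := by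
        have h2 : MvPolynomial.eval z (MvPolynomial.map Polynomial.C Q)
            = Polynomial.X ^ 2 * MvPolynomial.eval z' (MvPolynomial.map Polynomial.C Q) := by
          conv_lhs => rw [show z = fun i => Polynomial.X * z' i from funext hzz]
          exact eval_mul_of_isHomogeneous hP _ _
        rw [h0] at h2
        rcases mul_eq_zero.mp h2.symm with h | h
        · exact absurd h (pow_ne_zero _ Polynomial.X_ne_zero)
        · exact h
      apply ih z' _ hz'0 heval
      have hstrict : (∑ i, (z' i).natDegree) < ∑ i, (z i).natDegree := by
        refine Finset.sum_lt_sum (fun i _ => Polynomial.natDegree_divX_le) ⟨i0, Finset.mem_univ _, ?_⟩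
        have : (z i0).natDegree = 1 + (z' i0).natDegree := by
          rw [hzz i0, Polynomial.natDegree_mul Polynomial.X_ne_zero hzi0',
            Polynomial.natDegree_X]
        omega
      omega
    · refine ⟨fun i => (z i).coeff 0, hc, ?_⟩
      have h := congrArg (Polynomial.eval 0) h0
      rw [eval_coeff_zero] at h
      simpa using h

lemma L2 {m : ℕ} {Q : MvPolynomial (Fin m) K} (hQ : Q.IsHomogeneous 2) :
    ∀ N : ℕ, ∀ yL yR : Fin m → K[X],
      ((∑ i, (yL i).natDegree) + ∑ i, (yR i).natDegree) < N →
      ¬(yL = 0 ∧ yR = 0) →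
      MvPolynomial.eval yL (MvPolynomial.map Polynomial.C Q)
        + Polynomial.X * MvPolynomial.eval yR (MvPolynomial.map Polynomial.C Q) = 0 →
      ∃ x : Fin m → K, x ≠ 0 ∧ MvPolynomial.eval x Q = 0 := by
  intro N
  induction N with
  | zero => intro yL yR h; omega
  | succ N ih =>
    intro yL yR hlt hne hid
    have hP : (MvPolynomial.map (Polynomial.C : K →+* K[X]) Q).IsHomogeneous 2 := hQ.map _
    by_cases hL0 : yL = 0
    · have hA : MvPolynomial.eval yL (MvPolynomial.map Polynomial.C Q) = 0 := by
        subst hL0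
        rw [show (0 : Fin m → K[X]) = fun _ => (0 : K[X]) from rfl]
        rw [show (fun _ : Fin m => (0 : K[X])) = (0 : Fin m → K[X]) from rfl,
          MvPolynomial.eval_zero]
        exact hP.coeff_eq_zero (by simp)
      rw [hA, zero_add] at hid
      have hB : MvPolynomial.eval yR (MvPolynomial.map Polynomial.C Q) = 0 := by
        rcases mul_eq_zero.mp hid with h | h
        · exact absurd h Polynomial.X_ne_zero
        · exact h
      have hR0 : yR ≠ 0 := fun h => hne ⟨hL0, h⟩
      exact L1 hQ ((∑ i, (yR i).natDegree) + 1) yR (by omega) hR0 hB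
    · by_cases hc : (fun i => (yL i).coeff 0) = 0
      · set yL' : Fin m → K[X] := fun i => (yL i).divX with hyL'
        have hzz : ∀ i, yL i = Polynomial.X * yL' i := by
          intro i
          have h := Polynomial.X_mul_divX_add (yL i)
          have hc0 : (yL i).coeff 0 = 0 := congrFun hc i
          rw [hc0, map_zero, add_zero] at h
          exact h.symm
        obtain ⟨i0, hi0⟩ : ∃ i, yL i ≠ 0 := by
          by_contra h; push_neg at h; exact hL0 (funext h)
        have hzi0' : yL' i0 ≠ 0 := fun h => hi0 (by rw [hzz i0, h, mul_zero])
        have hyL'0 : yL' ≠ 0 := fun h => hzi0' (congrFun h i0)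
        have hevalL : MvPolynomial.eval yL (MvPolynomial.map Polynomial.C Q)
            = Polynomial.X ^ 2 * MvPolynomial.eval yL' (MvPolynomial.map Polynomial.C Q) := by
          conv_lhs => rw [show yL = fun i => Polynomial.X * yL' i from funext hzz]
          exact eval_mul_of_isHomogeneous hP _ _
        have hid' : MvPolynomial.eval yR (MvPolynomial.map Polynomial.C Q)
            + Polynomial.X * MvPolynomial.eval yL' (MvPolynomial.map Polynomial.C Q) = 0 := by
          rw [hevalL] at hid
          have hfac : Polynomial.X *
              (MvPolynomial.eval yR (MvPolynomial.map Polynomial.C Q)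
                + Polynomial.X * MvPolynomial.eval yL' (MvPolynomial.map Polynomial.C Q)) = 0 := by
            ring_nf
            ring_nf at hid
            linear_combination hid
          rcases mul_eq_zero.mp hfac with h | h
          · exact absurd h Polynomial.X_ne_zero
          · exact h
        have hne' : ¬(yR = 0 ∧ yL' = 0) := fun ⟨_, h⟩ => hyL'0 h
        apply ih yR yL' _ hne' hid'
        have hstrict : (∑ i, (yL' i).natDegree) < ∑ i, (yL i).natDegree := by
          refine Finset.sum_lt_sum (fun i _ => Polynomial.natDegree_divX_le)
            ⟨i0, Finset.mem_univ _, ?_⟩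
          have : (yL i0).natDegree = 1 + (yL' i0).natDegree := by
            rw [hzz i0, Polynomial.natDegree_mul Polynomial.X_ne_zero hzi0',
              Polynomial.natDegree_X]
          omega
        omega
      · refine ⟨fun i => (yL i).coeff 0, hc, ?_⟩
        have h := congrArg (Polynomial.eval 0) hid
        simp only [Polynomial.eval_add, Polynomial.eval_mul, Polynomial.eval_X, zero_mul,
          add_zero, Polynomial.eval_zero] at h
        rw [eval_coeff_zero] at h
        exact h

lemma key {m : ℕ} (Q : MvPolynomial (Fin m) K) (hQ : Q.IsHomogeneous 2)
    (hiso : ∀ Q' : MvPolynomial (Fin m ⊕ Fin m) (RatFunc K), Q'.IsHomogeneous 2 →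
      ∃ x : Fin m ⊕ Fin m → RatFunc K, x ≠ 0 ∧ MvPolynomial.eval x Q' = 0) :
    ∃ x : Fin m → K, x ≠ 0 ∧ MvPolynomial.eval x Q = 0 := by
  set P : MvPolynomial (Fin m) K[X] := MvPolynomial.map Polynomial.C Q with hPdef
  have hP : P.IsHomogeneous 2 := hQ.map _
  set QR : MvPolynomial (Fin m ⊕ Fin m) K[X] :=
    rename Sum.inl P + MvPolynomial.C Polynomial.X * rename Sum.inr P with hQRdef
  have hQR : QR.IsHomogeneous 2 :=
    hP.rename_isHomogeneous.add (hP.rename_isHomogeneous.C_mul _)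
  set QF : MvPolynomial (Fin m ⊕ Fin m) (RatFunc K) :=
    MvPolynomial.map (algebraMap K[X] (RatFunc K)) QR with hQFdef
  obtain ⟨x, hx0, hxz⟩ := hiso QF (hQR.map _)
  obtain ⟨b, hb⟩ := IsLocalization.exist_integer_multiples_of_finite
    (nonZeroDivisors K[X]) x
  have hb' : ∀ i, ∃ r : K[X], algebraMap K[X] (RatFunc K) r = (b : K[X]) • x i := fun i => hb i
  choose y hy using hb'
  have hinj : Function.Injective (algebraMap K[X] (RatFunc K)) :=
    IsFractionRing.injective K[X] (RatFunc K)
  have hbne : (algebraMap K[X] (RatFunc K)) (b : K[X]) ≠ 0 := by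
    intro h
    exact nonZeroDivisors.coe_ne_zero b (hinj (by rw [h, map_zero]))
  have hy0 : y ≠ 0 := by
    intro h
    apply hx0
    funext i
    have h2 := hy i
    rw [congrFun h i] at h2
    rw [Pi.zero_apply, map_zero, Algebra.smul_def] at h2
    rcases mul_eq_zero.mp h2.symm with h3 | h3
    · exact absurd h3 hbne
    · exact h3
  have h1 : MvPolynomial.eval (fun i => (algebraMap K[X] (RatFunc K)) (b : K[X]) * x i) QF
      = (algebraMap K[X] (RatFunc K)) (b : K[X]) ^ 2 * MvPolynomial.eval x QF :=
    eval_mul_of_isHomogeneous (hQR.map _) _ _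
  have h2 : (fun i => (algebraMap K[X] (RatFunc K)) (b : K[X]) * x i)
      = fun i => algebraMap K[X] (RatFunc K) (y i) := by
    funext i
    rw [hy i, Algebra.smul_def]
  have h3 : MvPolynomial.eval (fun i => algebraMap K[X] (RatFunc K) (y i)) QF
      = algebraMap K[X] (RatFunc K) (MvPolynomial.eval y QR) := by
    rw [hQFdef, MvPolynomial.eval_map]
    rw [show MvPolynomial.eval y QR = MvPolynomial.eval₂ (RingHom.id _) y QR from
      (MvPolynomial.eval₂_id QR).symm]
    rw [MvPolynomial.eval₂_comp_left (algebraMap K[X] (RatFunc K)) (RingHom.id _) y QR]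
    rfl
  have hzero : MvPolynomial.eval y QR = 0 := by
    apply hinj
    rw [← h3, ← h2, h1, hxz, mul_zero, map_zero]
  have hsplit : MvPolynomial.eval (y ∘ Sum.inl) P
      + Polynomial.X * MvPolynomial.eval (y ∘ Sum.inr) P = 0 := by
    rw [← hzero, hQRdef]
    rw [map_add, map_mul, MvPolynomial.eval_C, MvPolynomial.eval_rename,
      MvPolynomial.eval_rename]
  have hne : ¬(y ∘ Sum.inl = 0 ∧ y ∘ Sum.inr = 0) := by
    rintro ⟨hl, hr⟩
    apply hy0
    funext i
    cases i with
    | inl i => exact congrFun hl i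
    | inr i => exact congrFun hr i
  exact L2 hQ ((∑ i, ((y ∘ Sum.inl) i).natDegree) + (∑ i, ((y ∘ Sum.inr) i).natDegree) + 1)
    (y ∘ Sum.inl) (y ∘ Sum.inr) (by omega) hne hsplit

end UInvAux

/-- The u-invariant of a field: the least `n` (possibly `∞`) such that every
quadratic form in more than `n` variables has a non-trivial zero. -/
noncomputable def uInvariant (K : Type*) [Field K] : ℕ∞ :=
  sInf {n : ℕ∞ | ∀ m : ℕ, n < (m : ℕ∞) → ∀ Q : MvPolynomial (Fin m) K,
    Q.IsHomogeneous 2 → ∃ x : Fin m → K, x ≠ 0 ∧ MvPolynomial.eval x Q = 0}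

/-- `u(K(x)) ≥ 2 u(K)` for every field `K`. -/
theorem uInvariant_ratFunc_ge (K : Type*) [Field K] :
    2 * uInvariant K ≤ uInvariant (RatFunc K) := by
  rw [show uInvariant (RatFunc K) = sInf {n : ℕ∞ | ∀ m : ℕ, n < (m : ℕ∞) →
      ∀ Q : MvPolynomial (Fin m) (RatFunc K), Q.IsHomogeneous 2 →
        ∃ x : Fin m → RatFunc K, x ≠ 0 ∧ MvPolynomial.eval x Q = 0} from rfl]
  apply le_sInf
  intro n hn
  induction n using ENat.recTopCoe with
  | top => exact le_top
  | coe N =>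
    simp only [Set.mem_setOf_eq] at hn
    have hmem : ((N / 2 : ℕ) : ℕ∞) ∈ {n : ℕ∞ | ∀ m : ℕ, n < (m : ℕ∞) →
        ∀ Q : MvPolynomial (Fin m) K, Q.IsHomogeneous 2 →
          ∃ x : Fin m → K, x ≠ 0 ∧ MvPolynomial.eval x Q = 0} := by
      intro m hm Q hQ
      have hm' : N / 2 < m := by exact_mod_cast hm
      have h2m : (N : ℕ∞) < ((2 * m : ℕ) : ℕ∞) := by
        exact_mod_cast (by omega : N < 2 * m)
      apply UInvAux.key Q hQ
      intro Q' hQ'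
      let e : Fin m ⊕ Fin m ≃ Fin (2 * m) := finSumFinEquiv.trans (finCongr (by omega))
      obtain ⟨x, hx0, hxz⟩ := hn (2 * m) h2m (MvPolynomial.rename e Q')
        hQ'.rename_isHomogeneous
      refine ⟨x ∘ e, ?_, ?_⟩
      · intro h
        apply hx0
        funext j
        have := congrFun h (e.symm j)
        simpa using this
      · rw [← MvPolynomial.eval_rename]
        exact hxz
    have hle : uInvariant K ≤ ((N / 2 : ℕ) : ℕ∞) := sInf_le hmem
    calc 2 * uInvariant K ≤ 2 * ((N / 2 : ℕ) : ℕ∞) := by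
          exact mul_le_mul_right hle 2
      _ ≤ (N : ℕ∞) := by
          exact_mod_cast (by omega : 2 * (N / 2) ≤ N)
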